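/- arXiv:1804.06900 — 9 statements merged into one kernel-verified Lean document; each statement's English description precedes it below -/
import Mathlib

section
/- Let N ≥ 1, let D be an N×N complex matrix with Dᴴ = −D, let σ > 0 be real, let d : Fin N → ℝ, and set A = σ·D² and B = D·(diag(d) − σ·I)·D. Then for every vector v ∈ ℂ^N satisfying ⟨v, (−A)·v⟩ = 1, the quantity ⟨v, B·v⟩ is real and satisfies 1 − σ⁻¹·d_max ≤ ⟨v, B·v⟩ ≤ 1 − σ⁻¹·d_min. (This is part 1 of Proposition 1: the set W₁(A,B) for splittings of this form is strictly real and contained in the interval [1 − σ⁻¹ d_max, 1 − σ⁻¹ d_min].) -/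
open Matrix

/-- Proposition 1, part 1: for the splitting `A = σ D²`,
`B = D (diag d − σ I) D` with `Dᴴ = −D`, every element of
`W₁(A,B) = { ⟨v, B v⟩ : ⟨v, (−A) v⟩ = 1 }` is real and lies in
`[1 − σ⁻¹ d_max, 1 − σ⁻¹ d_min]`. -/
theorem stmt0 (N : ℕ) (hN : 1 ≤ N)
    (D : Matrix (Fin N) (Fin N) ℂ) (hD : D.conjTranspose = -D)
    (σ : ℝ) (hσ : 0 < σ) (d : Fin N → ℝ)
    (dmin dmax : ℝ)
    (hdmin : IsLeast (Set.range d) dmin)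
    (hdmax : IsGreatest (Set.range d) dmax)
    (A B : Matrix (Fin N) (Fin N) ℂ)
    (hA : A = (σ : ℂ) • (D * D))
    (hB : B = D * (Matrix.diagonal (fun j => (d j : ℂ)) - (σ : ℂ) • 1) * D)
    (v : Fin N → ℂ)
    (hv : star v ⬝ᵥ (-A).mulVec v = 1) :
    (star v ⬝ᵥ B.mulVec v).im = 0 ∧
    1 - σ⁻¹ * dmax ≤ (star v ⬝ᵥ B.mulVec v).re ∧
    (star v ⬝ᵥ B.mulVec v).re ≤ 1 - σ⁻¹ * dmin := by
  set w : Fin N → ℂ := D.mulVec v with hw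
  have key : ∀ M : Matrix (Fin N) (Fin N) ℂ,
      star v ⬝ᵥ (D * M * D).mulVec v = -(star w ⬝ᵥ M.mulVec w) := by
    intro M
    have h1 : star v ᵥ* D = -star w := by
      have := Matrix.star_mulVec (M := D.conjTranspose) (v := v)
      rw [Matrix.conjTranspose_conjTranspose] at this
      rw [← this, hD]
      simp [Matrix.neg_mulVec, hw]
    rw [← Matrix.mulVec_mulVec, ← Matrix.mulVec_mulVec, Matrix.dotProduct_mulVec, h1]
    simp [hw, Matrix.mulVec_mulVec]
  set s : Fin N → ℝ := fun j => Complex.normSq (w j) with hs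
  have hsnn : ∀ j, 0 ≤ s j := fun j => Complex.normSq_nonneg _
  have hAkey : star v ⬝ᵥ (-A).mulVec v = (σ : ℂ) * ∑ j, (s j : ℂ) := by
    have hA' : (-A) = D * (-((σ : ℂ) • 1)) * D := by
      rw [hA, Matrix.mul_neg, Matrix.neg_mul, Matrix.mul_smul, Matrix.smul_mul,
        Matrix.mul_one]
    rw [hA', key]
    simp [Matrix.neg_mulVec, Matrix.smul_mulVec, Matrix.one_mulVec, dotProduct,
      Finset.mul_sum, hs]
    refine Finset.sum_congr rfl fun j _ => ?_
    rw [← Complex.mul_conj]; ring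
  have hsum : ∑ j, s j = σ⁻¹ := by
    have h1 := hv
    rw [hAkey] at h1
    have h2 : ((σ * ∑ j, s j : ℝ) : ℂ) = 1 := by push_cast; rw [← h1]
    have h3 : (σ * ∑ j, s j : ℝ) = 1 := by exact_mod_cast h2
    field_simp
    linarith
  have hBkey : star v ⬝ᵥ B.mulVec v = ((∑ j, (σ - d j) * s j : ℝ) : ℂ) := by
    rw [hB, key]
    simp [Matrix.sub_mulVec, Matrix.mulVec_diagonal, Matrix.smul_mulVec,
      Matrix.one_mulVec, dotProduct, hs]
    rw [← Finset.sum_neg_distrib]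
    refine Finset.sum_congr rfl fun j _ => ?_
    rw [← Complex.mul_conj]; ring
  rw [hBkey]
  refine ⟨by simp, ?_, ?_⟩
  · simp only [Complex.ofReal_re]
    calc 1 - σ⁻¹ * dmax = ∑ j, (σ - dmax) * s j := by
          rw [← Finset.mul_sum, hsum]; field_simp
      _ ≤ ∑ j, (σ - d j) * s j := Finset.sum_le_sum fun j _ =>
          mul_le_mul_of_nonneg_right (by have := hdmax.2 ⟨j, rfl⟩; linarith) (hsnn j)
  · simp only [Complex.ofReal_re]
    calc (∑ j, (σ - d j) * s j) ≤ ∑ j, (σ - dmin) * s j := Finset.sum_le_sum fun j _ =>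
          mul_le_mul_of_nonneg_right (by have := hdmin.2 ⟨j, rfl⟩; linarith) (hsnn j)
      _ = 1 - σ⁻¹ * dmin := by
          rw [← Finset.mul_sum, hsum]; field_simp
end

section
/- Let N ≥ 1, let D be an N×N complex matrix with Dᴴ = −D, let σ > 0 be real, let d : Fin N → ℝ, and set A = σ·D² and B = D·(diag(d) − σ·I)·D. Suppose μ ∈ ℂ and v ∈ ℂ^N satisfy μ·((−A)·v) = B·v and D·v ≠ 0. Then μ is real and 1 − σ⁻¹·d_max ≤ μ ≤ 1 − σ⁻¹·d_min. (This is the generalized-eigenvalue bound in part 2 of Proposition 1: all generalized eigenvalues μ ∈ Λ(A,B) with eigenvector outside the kernel of D are real and lie in [1 − σ⁻¹ d_max, 1 − σ⁻¹ d_min].) -/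
open Matrix

/-- Proposition 1, part 2 (generalized-eigenvalue bound): for the splitting
`A = σ D²`, `B = D (diag d − σ I) D` with `Dᴴ = −D`, any generalized
eigenvalue `μ` (with `μ (−A) v = B v` and `D v ≠ 0`) is real and lies in
`[1 − σ⁻¹ d_max, 1 − σ⁻¹ d_min]`. -/
theorem stmt1 (N : ℕ) (hN : 1 ≤ N)
    (D : Matrix (Fin N) (Fin N) ℂ) (hD : D.conjTranspose = -D)
    (σ : ℝ) (hσ : 0 < σ) (d : Fin N → ℝ)
    (dmin dmax : ℝ)
    (hdmin : IsLeast (Set.range d) dmin)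
    (hdmax : IsGreatest (Set.range d) dmax)
    (A B : Matrix (Fin N) (Fin N) ℂ)
    (hA : A = (σ : ℂ) • (D * D))
    (hB : B = D * (Matrix.diagonal (fun j => (d j : ℂ)) - (σ : ℂ) • 1) * D)
    (μ : ℂ) (v : Fin N → ℂ)
    (hμv : μ • (-A).mulVec v = B.mulVec v)
    (hDv : D.mulVec v ≠ 0) :
    μ.im = 0 ∧ 1 - σ⁻¹ * dmax ≤ μ.re ∧ μ.re ≤ 1 - σ⁻¹ * dmin := by
  set w := D.mulVec v with hw
  have hvm : vecMul (star v) D = -star w := by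
    have h := Matrix.star_mulVec Dᴴ v
    rw [Matrix.conjTranspose_conjTranspose] at h
    rw [← h, hD]
    simp [hw, neg_mulVec]
  have hkey : ∀ u : Fin N → ℂ, star v ⬝ᵥ (D *ᵥ u) = -(star w ⬝ᵥ u) := by
    intro u
    rw [Matrix.dotProduct_mulVec, hvm, neg_dotProduct]
  set n : ℝ := ∑ j, Complex.normSq (w j) with hn
  set S : ℝ := ∑ j, d j * Complex.normSq (w j) with hS
  have hnpos : 0 < n := by
    have hne : ∃ j, w j ≠ 0 := by
      by_contra h
      push_neg at h
      exact hDv (funext fun j => h j)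
    obtain ⟨j, hj⟩ := hne
    have : 0 < Complex.normSq (w j) := Complex.normSq_pos.mpr hj
    refine Finset.sum_pos' (fun i _ => Complex.normSq_nonneg _) ⟨j, Finset.mem_univ j, this⟩
  have hww : star w ⬝ᵥ w = (n : ℂ) := by
    simp only [dotProduct, Pi.star_apply, hn]
    push_cast
    exact Finset.sum_congr rfl fun j _ => (Complex.normSq_eq_conj_mul_self).symm
  have heq : μ * ((σ : ℂ) * n) = (σ : ℂ) * n - S := by
    have h := congrArg (fun u => star v ⬝ᵥ u) hμv
    have hL : star v ⬝ᵥ (μ • (-A) *ᵥ v) = μ * ((σ : ℂ) * n) := by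
      rw [dotProduct_smul, hA]
      have h2 : (-((σ : ℂ) • (D * D))) *ᵥ v = -((σ : ℂ) • (D *ᵥ w)) := by
        rw [neg_mulVec, Matrix.smul_mulVec, ← Matrix.mulVec_mulVec]
      rw [h2, dotProduct_neg, dotProduct_smul, hkey, hww]
      simp [smul_eq_mul]
    have hR : star v ⬝ᵥ (B *ᵥ v) = (σ : ℂ) * n - S := by
      rw [hB]
      have h3 : (D * (Matrix.diagonal (fun j => (d j : ℂ)) - (σ : ℂ) • 1) * D) *ᵥ v
          = D *ᵥ ((Matrix.diagonal (fun j => (d j : ℂ)) - (σ : ℂ) • 1) *ᵥ w) := by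
        rw [← Matrix.mulVec_mulVec, ← Matrix.mulVec_mulVec]
      rw [h3, hkey]
      have hMw : (Matrix.diagonal (fun j => (d j : ℂ)) - (σ : ℂ) • 1) *ᵥ w
          = fun j => ((d j : ℂ) - σ) * w j := by
        funext j
        rw [Matrix.sub_mulVec]
        simp [Matrix.mulVec_diagonal, Matrix.smul_mulVec, Matrix.one_mulVec, sub_mul]
      rw [hMw]
      simp only [dotProduct, Pi.star_apply]
      have h4 : ∑ j, star (w j) * (((d j : ℂ) - σ) * w j)
          = ∑ j, ((d j : ℂ) - σ) * (Complex.normSq (w j) : ℂ) := by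
        refine Finset.sum_congr rfl fun j _ => ?_
        rw [Complex.normSq_eq_conj_mul_self, ← Complex.star_def]
        ring
      have h5 : ∑ j, ((d j : ℂ) - σ) * (Complex.normSq (w j) : ℂ)
          = (S : ℂ) - (σ : ℂ) * n := by
        rw [hS, hn]
        push_cast
        rw [Finset.mul_sum, ← Finset.sum_sub_distrib]
        exact Finset.sum_congr rfl fun j _ => by ring
      rw [h4, h5]
      ring
    rw [hL, hR] at h
    exact h
  have hσn : ((σ : ℂ) * n) ≠ 0 := by
    have : σ * n ≠ 0 := (mul_pos hσ hnpos).ne'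
    exact_mod_cast this
  have hμ : μ = ((((σ * n - S) / (σ * n)) : ℝ) : ℂ) := by
    push_cast
    rw [eq_div_iff hσn]
    linear_combination heq
  have him : μ.im = 0 := by rw [hμ, Complex.ofReal_im]
  have hre : μ.re = (σ * n - S) / (σ * n) := by rw [hμ, Complex.ofReal_re]
  have hσnR : (0:ℝ) < σ * n := mul_pos hσ hnpos
  refine ⟨him, ?_, ?_⟩
  · have hSle : S ≤ dmax * n := by
      rw [hS, hn, Finset.mul_sum]
      exact Finset.sum_le_sum fun j _ =>
        mul_le_mul_of_nonneg_right (hdmax.2 ⟨j, rfl⟩) (Complex.normSq_nonneg _)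
    rw [hre, sub_div, div_self hσnR.ne']
    have : S / (σ * n) ≤ σ⁻¹ * dmax := by
      rw [div_le_iff₀ hσnR]
      calc S ≤ dmax * n := hSle
        _ = σ⁻¹ * dmax * (σ * n) := by field_simp
    linarith
  · have hSge : dmin * n ≤ S := by
      rw [hS, hn, Finset.mul_sum]
      exact Finset.sum_le_sum fun j _ =>
        mul_le_mul_of_nonneg_right (hdmin.2 ⟨j, rfl⟩) (Complex.normSq_nonneg _)
    rw [hre, sub_div, div_self hσnR.ne']
    have : σ⁻¹ * dmin ≤ S / (σ * n) := by
      rw [le_div_iff₀ hσnR]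
      calc σ⁻¹ * dmin * (σ * n) = dmin * n := by field_simp
        _ ≤ S := hSge
    linarith
end

section
/- Let N ≥ 2, let D be an N×N complex matrix with Dᴴ = −D whose kernel (as a linear map on ℂ^N) is exactly the complex span of the all-ones vector 𝟙, let σ > 0 be real, let d : Fin N → ℝ, and set A = σ·D² and B = D·(diag(d) − σ·I)·D. Then there exist a real number μ and a nonzero vector v ∈ ℂ^N with Σ_j v_j = 0 such that B·v = μ·((−A)·v) and μ ≥ 1 − σ⁻¹·d2min, where d2min = min_{i≠j} max(d_i, d_j) is the second-smallest entry of d counted with multiplicity. (This is the lower bound 1 − σ⁻¹ d_{2,min} ≤ μ_max on the largest generalized eigenvalue in part 2 of Proposition 1.) -/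
open Matrix

lemma exists_lwc (N : ℕ) (hN : 2 ≤ N) (d : Fin N → ℝ) (d2min : ℝ)
    (hd2min : IsLeast {x : ℝ | ∃ i j : Fin N, i ≠ j ∧ x = max (d i) (d j)} d2min) :
    ∃ (lam : ℝ) (c : ℂ) (w : Fin N → ℂ), lam ≤ d2min ∧ w ≠ 0 ∧ (∑ k, w k) = 0 ∧
      ∀ k, (d k : ℂ) * w k = (lam : ℂ) * w k + c := by
  by_cases hcase : ∃ p q : Fin N, p ≠ q ∧ d p = d q ∧ d p ≤ d2min
  · obtain ⟨p, q, hpq, hdd, hle⟩ := hcase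
    refine ⟨d p, 0, Pi.single p 1 - Pi.single q 1, hle, ?_, ?_, ?_⟩
    · intro h
      have := congrFun h p
      simp [Pi.single_eq_same, Pi.single_eq_of_ne hpq] at this
    · simp [Finset.sum_sub_distrib]
    · intro k
      by_cases hkp : k = p
      · subst hkp
        simp [Pi.single_eq_same, Pi.single_eq_of_ne hpq]
      · by_cases hkq : k = q
        · subst hkq
          have : (d k : ℂ) = (d p : ℂ) := Complex.ofReal_inj.mpr hdd.symm
          simp [Pi.single_eq_same, Pi.single_eq_of_ne (Ne.symm hpq), this]
        · simp [Pi.single_eq_of_ne hkp, Pi.single_eq_of_ne hkq]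
  · push_neg at hcase
    -- minimum index a
    obtain ⟨a, -, ha⟩ := Finset.exists_min_image Finset.univ d ⟨⟨0, by omega⟩, Finset.mem_univ _⟩
    have hane : (Finset.univ.erase a).Nonempty := by
      rw [← Finset.card_pos, Finset.card_erase_of_mem (Finset.mem_univ a)]
      simp only [Finset.card_univ, Fintype.card_fin]
      omega
    obtain ⟨b, hbmem, hb⟩ := Finset.exists_min_image (Finset.univ.erase a) d hane
    have hba : b ≠ a := Finset.ne_of_mem_erase hbmem
    -- d b ≤ d2min
    have hbd2 : d b ≤ d2min := by
      obtain ⟨p, q, hpq, heq⟩ := hd2min.1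
      rcases eq_or_ne p a with rfl | hpa
      · have : d b ≤ d q := hb q (Finset.mem_erase.mpr ⟨fun h => hpq h.symm, Finset.mem_univ _⟩)
        exact le_trans this (heq ▸ le_max_right _ _)
      · have : d b ≤ d p := hb p (Finset.mem_erase.mpr ⟨hpa, Finset.mem_univ _⟩)
        exact le_trans this (heq ▸ le_max_left _ _)
    have had2 : d a ≤ d2min := le_trans (ha b (Finset.mem_univ b)) hbd2
    -- strict minimum: ∀ k ≠ a, d a < d k
    have hstrict : ∀ k, k ≠ a → d a < d k := by
      intro k hk
      rcases lt_or_eq_of_le (ha k (Finset.mem_univ k)) with h | h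
      · exact h
      · have := hcase k a hk h.symm
        linarith
    have hab : d a < d b := hstrict b hba
    -- ∀ k ≠ a, k ≠ b → d b < d k
    have hstrict2 : ∀ k, k ≠ a → k ≠ b → d b < d k := by
      intro k hka hkb
      rcases lt_or_eq_of_le (hb k (Finset.mem_erase.mpr ⟨hka, Finset.mem_univ _⟩)) with h | h
      · exact h
      · have := hcase k b hkb h.symm
        linarith
    -- the polynomial g
    set g : ℝ → ℝ := fun x => ∑ k, ∏ j ∈ Finset.univ.erase k, (d j - x) with hg
    have hgcont : Continuous g := by
      apply continuous_finset_sum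
      intro k _
      apply continuous_finset_prod
      intro j _
      exact continuous_const.sub continuous_id
    have hga : 0 < g (d a) := by
      have : g (d a) = ∏ j ∈ Finset.univ.erase a, (d j - d a) := by
        show (∑ k : Fin N, ∏ j ∈ Finset.univ.erase k, (d j - d a)) = _
        rw [Finset.sum_eq_single a]
        · intro k _ hk
          exact Finset.prod_eq_zero (Finset.mem_erase.mpr ⟨Ne.symm hk, Finset.mem_univ _⟩)
            (by ring)
        · intro h; exact absurd (Finset.mem_univ a) h
      rw [this]
      apply Finset.prod_pos
      intro j hj
      have := hstrict j (Finset.ne_of_mem_erase hj)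
      linarith
    have hgb : g (d b) < 0 := by
      have h1 : g (d b) = ∏ j ∈ Finset.univ.erase b, (d j - d b) := by
        show (∑ k : Fin N, ∏ j ∈ Finset.univ.erase k, (d j - d b)) = _
        rw [Finset.sum_eq_single b]
        · intro k _ hk
          exact Finset.prod_eq_zero (Finset.mem_erase.mpr ⟨Ne.symm hk, Finset.mem_univ _⟩)
            (by ring)
        · intro h; exact absurd (Finset.mem_univ b) h
      have hamem : a ∈ Finset.univ.erase b := Finset.mem_erase.mpr ⟨Ne.symm hba, Finset.mem_univ _⟩
      rw [h1, ← Finset.mul_prod_erase _ _ hamem]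
      have hneg : d a - d b < 0 := by linarith
      have hpos : 0 < ∏ j ∈ (Finset.univ.erase b).erase a, (d j - d b) := by
        apply Finset.prod_pos
        intro j hj
        have hja : j ≠ a := Finset.ne_of_mem_erase hj
        have hjb : j ≠ b := Finset.ne_of_mem_erase (Finset.mem_of_mem_erase hj)
        have := hstrict2 j hja hjb
        linarith
      exact mul_neg_of_neg_of_pos hneg hpos
    -- IVT
    have hivt : ∃ lam ∈ Set.Icc (d a) (d b), g lam = 0 := by
      have hsub := intermediate_value_Icc' (le_of_lt hab) hgcont.continuousOn
      have : (0 : ℝ) ∈ Set.Icc (g (d b)) (g (d a)) := ⟨le_of_lt hgb, le_of_lt hga⟩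
      obtain ⟨lam, hmem, hval⟩ := hsub this
      exact ⟨lam, hmem, hval⟩
    obtain ⟨lam, hlmem, hlval⟩ := hivt
    have hlb : lam < d b := by
      rcases lt_or_eq_of_le hlmem.2 with h | h
      · exact h
      · rw [h] at hlval; rw [hlval] at hgb; exact absurd hgb (lt_irrefl _)
    have hlgt : ∀ j, j ≠ a → lam < d j := by
      intro j hj
      rcases eq_or_ne j b with rfl | hjb
      · exact hlb
      · exact lt_trans hlb (hstrict2 j hj hjb)
    refine ⟨lam, ((∏ j, (d j - lam) : ℝ) : ℂ),
      fun k => ((∏ j ∈ Finset.univ.erase k, (d j - lam) : ℝ) : ℂ),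
      le_trans (le_of_lt hlb) hbd2, ?_, ?_, ?_⟩
    · intro h
      have := congrFun h a
      simp only [Pi.zero_apply, Complex.ofReal_eq_zero] at this
      have hpos : 0 < ∏ j ∈ Finset.univ.erase a, (d j - lam) := by
        apply Finset.prod_pos
        intro j hj
        have := hlgt j (Finset.ne_of_mem_erase hj)
        linarith
      rw [this] at hpos; exact absurd hpos (lt_irrefl _)
    · rw [← Complex.ofReal_sum]
      rw [show (∑ k, ∏ j ∈ Finset.univ.erase k, (d j - lam)) = g lam from rfl, hlval]
      simp
    · intro k
      have hreal : (d k - lam) * ∏ j ∈ Finset.univ.erase k, (d j - lam)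
          = ∏ j, (d j - lam) :=
        Finset.mul_prod_erase Finset.univ (fun j => d j - lam) (Finset.mem_univ k)
      have h5 : ((d k : ℂ) - lam) * ((∏ j ∈ Finset.univ.erase k, (d j - lam) : ℝ) : ℂ)
          = ((∏ j, (d j - lam) : ℝ) : ℂ) := by
        rw [show ((d k : ℂ) - lam) = (((d k - lam : ℝ)) : ℂ) by push_cast; ring,
          ← Complex.ofReal_mul, hreal]
      linear_combination h5

/-- Proposition 1, part 2 (lower bound on the largest generalized eigenvalue):
for the splitting `A = σ D²`, `B = D (diag d − σ I) D` with `Dᴴ = −D` and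
`ker D = span{𝟙}`, there is a real generalized eigenvalue `μ` on the
mean-zero subspace with `μ ≥ 1 − σ⁻¹ d_{2,min}`, where `d_{2,min}` is the
second-smallest entry of `d` (with multiplicity). -/
theorem stmt2 (N : ℕ) (hN : 2 ≤ N)
    (D : Matrix (Fin N) (Fin N) ℂ) (hD : D.conjTranspose = -D)
    (hker : LinearMap.ker D.mulVecLin =
      Submodule.span ℂ {(fun _ => 1 : Fin N → ℂ)})
    (σ : ℝ) (hσ : 0 < σ) (d : Fin N → ℝ)
    (d2min : ℝ)
    (hd2min : IsLeast {x : ℝ | ∃ i j : Fin N, i ≠ j ∧ x = max (d i) (d j)} d2min)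
    (A B : Matrix (Fin N) (Fin N) ℂ)
    (hA : A = (σ : ℂ) • (D * D))
    (hB : B = D * (Matrix.diagonal (fun j => (d j : ℂ)) - (σ : ℂ) • 1) * D) :
    ∃ (μ : ℝ) (v : Fin N → ℂ), v ≠ 0 ∧ (∑ j, v j) = 0 ∧
      B.mulVec v = (μ : ℂ) • (-A).mulVec v ∧
      1 - σ⁻¹ * d2min ≤ μ := by
  obtain ⟨lam, c, w, hlam, hw0, hwsum, hweq⟩ := exists_lwc N hN d d2min hd2min
  set u : Fin N → ℂ := fun _ => 1 with hu
  have hu0 : u ≠ 0 := by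
    intro h
    have := congrFun h ⟨0, by omega⟩
    simp [hu] at this
  have humem : u ∈ LinearMap.ker D.mulVecLin := by
    rw [hker]; exact Submodule.mem_span_singleton_self _
  have hDu : D.mulVec u = 0 := by
    have := LinearMap.mem_ker.mp humem
    rwa [Matrix.mulVecLin_apply] at this
  have hrow : ∀ k, ∑ j, D k j = 0 := by
    intro k
    have := congrFun hDu k
    simpa [Matrix.mulVec, dotProduct, hu] using this
  have hcol : ∀ k, ∑ j, D j k = 0 := by
    intro k
    have h1 : ∀ j, D j k = -(starRingEnd ℂ) (D k j) := by
      intro j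
      have h2 := congrFun (congrFun hD k) j
      rw [Matrix.conjTranspose_apply, Matrix.neg_apply] at h2
      have := congrArg (starRingEnd ℂ) h2
      simpa using this
    calc ∑ j, D j k = ∑ j, -(starRingEnd ℂ) (D k j) := by
          exact Finset.sum_congr rfl fun j _ => h1 j
      _ = -(starRingEnd ℂ) (∑ j, D k j) := by rw [map_sum, Finset.sum_neg_distrib]
      _ = 0 := by rw [hrow]; simp
  -- the sum functional
  set f : (Fin N → ℂ) →ₗ[ℂ] ℂ := ∑ j, LinearMap.proj j with hf
  have hfapp : ∀ v : Fin N → ℂ, f v = ∑ j, v j := by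
    intro v
    simp [hf, LinearMap.sum_apply, LinearMap.proj_apply]
  have hfsurj : Function.Surjective f := by
    intro x
    refine ⟨Pi.single ⟨0, by omega⟩ x, ?_⟩
    rw [hfapp]
    simp [Finset.sum_pi_single']
  have hrange_le : LinearMap.range D.mulVecLin ≤ LinearMap.ker f := by
    rintro x ⟨v, rfl⟩
    rw [LinearMap.mem_ker, hfapp, Matrix.mulVecLin_apply]
    calc ∑ j, D.mulVec v j = ∑ j, ∑ k, D j k * v k := by
          simp [Matrix.mulVec, dotProduct]
      _ = ∑ k, (∑ j, D j k) * v k := by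
          rw [Finset.sum_comm]
          simp [Finset.sum_mul]
      _ = 0 := by simp [hcol]
  have hdim : Module.finrank ℂ (Fin N → ℂ) = N := by simp
  have hker1 : Module.finrank ℂ (LinearMap.ker D.mulVecLin) = 1 := by
    rw [hker]
    exact finrank_span_singleton hu0
  have h2 := LinearMap.finrank_range_add_finrank_ker D.mulVecLin
  have h3 := LinearMap.finrank_range_add_finrank_ker f
  have hfr : Module.finrank ℂ (LinearMap.range f) = 1 := by
    rw [LinearMap.range_eq_top.mpr hfsurj]
    simp
  rw [hdim, hker1] at h2
  rw [hdim, hfr] at h3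
  have heq : LinearMap.range D.mulVecLin = LinearMap.ker f :=
    Submodule.eq_of_le_of_finrank_eq hrange_le (by omega)
  have hwmem : w ∈ LinearMap.range D.mulVecLin := by
    rw [heq, LinearMap.mem_ker, hfapp]
    exact hwsum
  obtain ⟨v0, hv0⟩ := hwmem
  rw [Matrix.mulVecLin_apply] at hv0
  set s : ℂ := (∑ j, v0 j) / N with hs
  set v : Fin N → ℂ := v0 - s • u with hv
  have hNne : (N : ℂ) ≠ 0 := by
    exact_mod_cast Nat.cast_ne_zero.mpr (by omega)
  have hvsum : ∑ j, v j = 0 := by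
    rw [hv]
    simp only [Pi.sub_apply, Pi.smul_apply, hu, smul_eq_mul, mul_one]
    rw [Finset.sum_sub_distrib, Finset.sum_const, Finset.card_univ, Fintype.card_fin, hs]
    rw [nsmul_eq_mul]
    field_simp
    ring
  have hDv : D.mulVec v = w := by
    rw [hv, Matrix.mulVec_sub, Matrix.mulVec_smul, hDu, hv0]
    simp
  have hvne : v ≠ 0 := by
    intro h
    rw [h, Matrix.mulVec_zero] at hDv
    exact hw0 hDv.symm
  refine ⟨1 - σ⁻¹ * lam, v, hvne, hvsum, ?_, ?_⟩
  · -- the eigenvalue equation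
    have hdiag : (Matrix.diagonal (fun j => (d j : ℂ)) - (σ : ℂ) • 1).mulVec w
        = ((lam : ℂ) - σ) • w + c • u := by
      funext k
      have h4 := hweq k
      rw [Matrix.sub_mulVec, Matrix.smul_mulVec, Matrix.one_mulVec]
      simp only [Pi.sub_apply, Pi.add_apply, Pi.smul_apply, hu, smul_eq_mul, mul_one]
      rw [Matrix.mulVec_diagonal]
      rw [h4]
      ring
    have hlhs : B.mulVec v = ((lam : ℂ) - σ) • D.mulVec w := by
      rw [hB, ← Matrix.mulVec_mulVec, ← Matrix.mulVec_mulVec, hDv, hdiag]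
      rw [Matrix.mulVec_add, Matrix.mulVec_smul, Matrix.mulVec_smul, hDu]
      simp
    have hrhs : (-A).mulVec v = (-(σ : ℂ)) • D.mulVec w := by
      rw [hA, Matrix.neg_mulVec, Matrix.smul_mulVec, ← Matrix.mulVec_mulVec, hDv]
      rw [neg_smul]
    rw [hlhs, hrhs, smul_smul]
    congr 1
    have hσne : (σ : ℂ) ≠ 0 := by
      exact_mod_cast Complex.ofReal_ne_zero.mpr (ne_of_gt hσ)
    push_cast
    field_simp
    ring
  · have : σ⁻¹ * lam ≤ σ⁻¹ * d2min :=
      mul_le_mul_of_nonneg_left hlam (inv_nonneg.mpr (le_of_lt hσ))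
    linarith
end

section
/- Let N ≥ 2, let D be an N×N complex matrix with Dᴴ = −D whose kernel (as a linear map on ℂ^N) is exactly the complex span of the all-ones vector 𝟙, let σ > 0 be real, let d : Fin N → ℝ, and set A = σ·D² and B = D·(diag(d) − σ·I)·D. Then there exist a real number μ and a nonzero vector v ∈ ℂ^N with Σ_j v_j = 0 such that B·v = μ·((−A)·v) and μ ≤ 1 − σ⁻¹·d2max, where d2max = max_{i≠j} min(d_i, d_j) is the second-largest entry of d counted with multiplicity. (This is the upper bound μ_min ≤ 1 − σ⁻¹ d_{2,max} on the smallest generalized eigenvalue in part 2 of Proposition 1.) -/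
open Matrix

lemma rayleigh_le {N : ℕ} {M : Matrix (Fin N) (Fin N) ℂ} (hM : M.IsHermitian)
    {c : ℝ} (hc : ∀ i, hM.eigenvalues i ≤ c) (x : Fin N → ℂ) :
    (star x ⬝ᵥ (M *ᵥ x)).re ≤ c * (star x ⬝ᵥ x).re := by
  set U : Matrix (Fin N) (Fin N) ℂ := (hM.eigenvectorUnitary : Matrix (Fin N) (Fin N) ℂ) with hU
  have hU1 : U * star U = 1 := (Matrix.mem_unitaryGroup_iff).mp hM.eigenvectorUnitary.2
  set y : Fin N → ℂ := star U *ᵥ x with hy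
  have hyx : U *ᵥ y = x := by rw [hy, mulVec_mulVec, hU1, one_mulVec]
  have key : ∀ z, star x ⬝ᵥ (U *ᵥ z) = star y ⬝ᵥ z := by
    intro z
    rw [dotProduct_mulVec]
    congr 1
    rw [hy, star_mulVec, star_eq_conjTranspose, conjTranspose_conjTranspose]
  have hnsq : ∀ z : ℂ, (Complex.normSq z : ℂ) = star z * z := by
    intro z
    rw [Complex.star_def, ← Complex.normSq_eq_conj_mul_self]
  have hMx : M *ᵥ x = U *ᵥ (diagonal (RCLike.ofReal ∘ hM.eigenvalues) *ᵥ y) := by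
    rw [hy, mulVec_mulVec, mulVec_mulVec]
    congr 1
    exact hM.spectral_theorem
  have h1 : star x ⬝ᵥ (M *ᵥ x) = ∑ k, ((hM.eigenvalues k : ℂ) * (Complex.normSq (y k) : ℂ)) := by
    rw [hMx, key]
    simp only [dotProduct, Pi.star_apply, mulVec_diagonal, Function.comp]
    refine Finset.sum_congr rfl fun k _ => ?_
    rw [hnsq, mul_left_comm]; norm_cast
  have h2 : star x ⬝ᵥ x = ∑ k, (Complex.normSq (y k) : ℂ) := by
    calc star x ⬝ᵥ x = star x ⬝ᵥ (U *ᵥ y) := by rw [hyx]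
    _ = star y ⬝ᵥ y := key y
    _ = ∑ k, (Complex.normSq (y k) : ℂ) := by
        simp only [dotProduct, Pi.star_apply]
        refine Finset.sum_congr rfl fun k _ => ?_
        rw [hnsq]
  rw [h1, h2]
  have e1 : (∑ k, ((hM.eigenvalues k : ℂ) * (Complex.normSq (y k) : ℂ))).re
      = ∑ k, hM.eigenvalues k * Complex.normSq (y k) := by
    rw [Complex.re_sum]
    refine Finset.sum_congr rfl fun k _ => ?_
    rw [← Complex.ofReal_mul, Complex.ofReal_re]
  have e2 : (∑ k, ((Complex.normSq (y k) : ℂ) : ℂ)).re = ∑ k, Complex.normSq (y k) := by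
    rw [Complex.re_sum]
    simp
  rw [e1, e2, Finset.mul_sum]
  refine Finset.sum_le_sum fun k _ => ?_
  exact mul_le_mul_of_nonneg_right (hc k) (Complex.normSq_nonneg _)

/-- Proposition 1, part 2 (upper bound on the smallest generalized eigenvalue):
for the splitting `A = σ D²`, `B = D (diag d − σ I) D` with `Dᴴ = −D` and
`ker D = span{𝟙}`, there is a real generalized eigenvalue `μ` on the
mean-zero subspace with `μ ≤ 1 − σ⁻¹ d_{2,max}`, where `d_{2,max}` is the
second-largest entry of `d` (with multiplicity). -/
theorem stmt3 (N : ℕ) (hN : 2 ≤ N)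
    (D : Matrix (Fin N) (Fin N) ℂ) (hD : D.conjTranspose = -D)
    (hker : LinearMap.ker D.mulVecLin =
      Submodule.span ℂ {(fun _ => 1 : Fin N → ℂ)})
    (σ : ℝ) (hσ : 0 < σ) (d : Fin N → ℝ)
    (d2max : ℝ)
    (hd2max : IsGreatest {x : ℝ | ∃ i j : Fin N, i ≠ j ∧ x = min (d i) (d j)} d2max)
    (A B : Matrix (Fin N) (Fin N) ℂ)
    (hA : A = (σ : ℂ) • (D * D))
    (hB : B = D * (Matrix.diagonal (fun j => (d j : ℂ)) - (σ : ℂ) • 1) * D) :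
    ∃ (μ : ℝ) (v : Fin N → ℂ), v ≠ 0 ∧ (∑ j, v j) = 0 ∧
      B.mulVec v = (μ : ℂ) • (-A).mulVec v ∧
      μ ≤ 1 - σ⁻¹ * d2max := by
  have hN0 : 0 < N := by omega
  haveI : NeZero N := ⟨by omega⟩
  have hNR : (N : ℝ) ≠ 0 := Nat.cast_ne_zero.mpr (by omega)
  have hNC : (N : ℂ) ≠ 0 := Nat.cast_ne_zero.mpr (by omega)
  have hσC : (σ : ℂ) ≠ 0 := by exact_mod_cast hσ.ne'
  obtain ⟨i0, j0, hij, hmin⟩ := hd2max.1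
  -- basic objects
  set ones : Fin N → ℂ := fun _ => 1 with hones
  set dC : Fin N → ℂ := fun j => (d j : ℂ) with hdC
  set Jm : Matrix (Fin N) (Fin N) ℂ := Matrix.of (fun _ _ => (1 : ℂ)) with hJm
  set Pm : Matrix (Fin N) (Fin N) ℂ := 1 - ((N : ℂ))⁻¹ • Jm with hPm
  set t : ℝ := (d2max - 1) / N with ht
  set Mm : Matrix (Fin N) (Fin N) ℂ :=
    Pm * Matrix.diagonal dC * Pm + (t : ℂ) • Jm with hMm
  have hsum_ones : (∑ k : Fin N, ones k) = (N : ℂ) := by simp [hones]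
  -- mulVec facts
  have hJmul : ∀ x : Fin N → ℂ, Jm *ᵥ x = (∑ k, x k) • ones := by
    intro x; ext i; simp [hJm, mulVec, dotProduct, hones]
  have hPmul : ∀ x : Fin N → ℂ, Pm *ᵥ x = x - ((N : ℂ))⁻¹ • ((∑ k, x k) • ones) := by
    intro x
    rw [hPm, sub_mulVec, one_mulVec, smul_mulVec, hJmul]
  have hPsum : ∀ x : Fin N → ℂ, (∑ k, x k) = 0 → Pm *ᵥ x = x := by
    intro x hx; rw [hPmul, hx]; simp
  have hsumP : ∀ x : Fin N → ℂ, ∑ k, (Pm *ᵥ x) k = 0 := by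
    intro x
    rw [hPmul]
    simp only [Pi.sub_apply, Pi.smul_apply, smul_eq_mul, hones, mul_one]
    rw [Finset.sum_sub_distrib, Finset.sum_const, Finset.card_univ, Fintype.card_fin,
      nsmul_eq_mul]
    field_simp
    simp
  have hPones : Pm *ᵥ ones = 0 := by
    rw [hPmul, hsum_ones]
    ext i
    simp [inv_mul_cancel₀ hNC, hones]
  -- Hermitian facts
  have hJherm : Jm.conjTranspose = Jm := by
    ext i j; simp [hJm, conjTranspose_apply]
  have hPherm : Pm.conjTranspose = Pm := by
    rw [hPm, conjTranspose_sub, conjTranspose_smul, conjTranspose_one, hJherm]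
    congr 1
    rw [star_inv₀, star_natCast]
  have hdherm : (Matrix.diagonal dC).conjTranspose = Matrix.diagonal dC := by
    have hstar : star dC = dC := by
      funext j
      simp [hdC, Complex.star_def, Complex.conj_ofReal]
    rw [diagonal_conjTranspose, hstar]
  have hMherm : Mm.IsHermitian := by
    have h1 : (Pm * Matrix.diagonal dC * Pm).conjTranspose = Pm * Matrix.diagonal dC * Pm := by
      rw [conjTranspose_mul, conjTranspose_mul, hPherm, hdherm, Matrix.mul_assoc]
    have h2 : ((t : ℂ) • Jm).conjTranspose = (t : ℂ) • Jm := by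
      rw [conjTranspose_smul, hJherm, Complex.star_def, Complex.conj_ofReal]
    show Mm.conjTranspose = Mm
    rw [hMm, conjTranspose_add, h1, h2]
  -- eigen data
  obtain ⟨im, him⟩ := Finite.exists_max hMherm.eigenvalues
  set lam : ℝ := hMherm.eigenvalues im with hlam
  set u : Fin N → ℂ := ⇑(hMherm.eigenvectorBasis im) with hu
  have hu_eig : Mm *ᵥ u = (lam : ℂ) • u := by
    rw [hu, hMherm.mulVec_eigenvectorBasis]
    ext k
    simp [Complex.real_smul, hlam]
  have hu_ne : u ≠ 0 := by
    intro h
    apply hMherm.eigenvectorBasis.orthonormal.ne_zero im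
    ext k
    exact congrFun h k
  -- Rayleigh: lam ≥ d2max
  have hlam_ge : d2max ≤ lam := by
    set u0 : Fin N → ℂ := Pi.single i0 (1 : ℂ) - Pi.single j0 1 with hu0
    have hsum_u0 : (∑ k, u0 k) = 0 := by
      simp [hu0, Finset.sum_sub_distrib]
    have h1 : Mm *ᵥ u0 = Pm *ᵥ (Matrix.diagonal dC *ᵥ u0) := by
      rw [hMm, add_mulVec, smul_mulVec, hJmul, hsum_u0, zero_smul, smul_zero, add_zero,
        ← mulVec_mulVec, hPsum u0 hsum_u0, ← mulVec_mulVec]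
    have hdotones : star u0 ⬝ᵥ ones = 0 := by
      simp only [dotProduct, Pi.star_apply, hones, mul_one]
      rw [← star_sum, hsum_u0, star_zero]
    have h2 : star u0 ⬝ᵥ (Mm *ᵥ u0) = ((d i0 + d j0 : ℝ) : ℂ) := by
      rw [h1, hPmul, dotProduct_sub, dotProduct_smul, dotProduct_smul, hdotones, smul_zero,
        smul_zero, sub_zero]
      have hterm : ∀ k, star (u0 k) * ((Matrix.diagonal dC *ᵥ u0) k)
          = ((Pi.single i0 ((d i0 : ℂ)) + Pi.single j0 ((d j0 : ℂ))) : Fin N → ℂ) k := by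
        intro k
        rw [mulVec_diagonal]
        rcases eq_or_ne k i0 with rfl | hki
        · simp [hu0, Pi.single_apply, hij, hij.symm, hdC]
        · rcases eq_or_ne k j0 with rfl | hkj
          · simp [hu0, Pi.single_apply, hij, hij.symm, hdC]
          · simp [hu0, Pi.single_apply, hki, hkj, hdC]
      rw [dotProduct]
      simp only [Pi.star_apply]
      rw [Finset.sum_congr rfl fun k _ => hterm k]
      simp only [Pi.add_apply, Finset.sum_add_distrib]
      rw [Finset.sum_pi_single', Finset.sum_pi_single']
      simp
    have h3 : star u0 ⬝ᵥ u0 = 2 := by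
      have hterm2 : ∀ k, star (u0 k) * u0 k
          = ((Pi.single i0 ((1 : ℂ)) + Pi.single j0 ((1 : ℂ))) : Fin N → ℂ) k := by
        intro k
        rcases eq_or_ne k i0 with rfl | hki
        · simp [hu0, Pi.single_apply, hij, hij.symm]
        · rcases eq_or_ne k j0 with rfl | hkj
          · simp [hu0, Pi.single_apply, hij, hij.symm]
          · simp [hu0, Pi.single_apply, hki, hkj]
      rw [dotProduct]
      simp only [Pi.star_apply]
      rw [Finset.sum_congr rfl fun k _ => hterm2 k]
      simp only [Pi.add_apply, Finset.sum_add_distrib]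
      rw [Finset.sum_pi_single', Finset.sum_pi_single']
      norm_num
    have hray := rayleigh_le hMherm him u0
    rw [h2, h3] at hray
    simp only [Complex.ofReal_re] at hray
    have h4 : (2 : ℂ).re = 2 := by norm_num
    rw [h4] at hray
    have h5 : d2max ≤ d i0 := hmin ▸ min_le_left _ _
    have h6 : d2max ≤ d j0 := hmin ▸ min_le_right _ _
    linarith
  -- Mm fixes ones up to scalar
  have hMones : Mm *ᵥ ones = ((d2max - 1 : ℝ) : ℂ) • ones := by
    rw [hMm, add_mulVec, smul_mulVec, hJmul, hsum_ones, ← mulVec_mulVec, hPones,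
      mulVec_zero, zero_add, smul_smul]
    congr 1
    rw [ht]
    push_cast
    field_simp
  -- mean-zero of u
  have hSu : (∑ k, u k) = 0 := by
    have hstarones : star ones = ones := by
      ext k; simp [hones]
    have e1 : star ones ⬝ᵥ (Mm *ᵥ u) = (lam : ℂ) * ∑ k, u k := by
      rw [hu_eig, dotProduct_smul, hstarones, smul_eq_mul]
      congr 1
      simp [dotProduct, hones]
    have e2 : star ones ⬝ᵥ (Mm *ᵥ u) = ((d2max - 1 : ℝ) : ℂ) * ∑ k, u k := by
      rw [dotProduct_mulVec]
      have hvm : star ones ᵥ* Mm = ((d2max - 1 : ℝ) : ℂ) • star ones := by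
        rw [← conjTranspose_conjTranspose Mm]
        rw [← star_mulVec, hMherm.eq, hMones, star_smul, hstarones]
        congr 1
        rw [Complex.star_def, Complex.conj_ofReal]
      rw [hvm, smul_dotProduct, hstarones, smul_eq_mul]
      congr 1
      simp [dotProduct, hones]
    have hlam_ne : ((lam : ℂ)) - ((d2max - 1 : ℝ) : ℂ) ≠ 0 := by
      rw [sub_ne_zero]
      exact_mod_cast (by linarith : lam ≠ d2max - 1)
    have hzero : ((lam : ℂ) - ((d2max - 1 : ℝ) : ℂ)) * ∑ k, u k = 0 := by
      rw [sub_mul, e1.symm.trans e2]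
      ring
    exact (mul_eq_zero.mp hzero).resolve_left hlam_ne
  -- diagonal action on u
  obtain ⟨c, hc⟩ : ∃ c : ℂ, Matrix.diagonal dC *ᵥ u = (lam : ℂ) • u + c • ones := by
    have h4 : Mm *ᵥ u = Pm *ᵥ (Matrix.diagonal dC *ᵥ u) := by
      rw [hMm, add_mulVec, smul_mulVec, hJmul, hSu, zero_smul, smul_zero, add_zero,
        ← mulVec_mulVec, hPsum u hSu, ← mulVec_mulVec]
    have h5 : Matrix.diagonal dC *ᵥ u
        - ((N : ℂ))⁻¹ • ((∑ k, (Matrix.diagonal dC *ᵥ u) k) • ones) = (lam : ℂ) • u := by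
      rw [← hPmul, ← h4, hu_eig]
    refine ⟨((N : ℂ))⁻¹ * ∑ k, (Matrix.diagonal dC *ᵥ u) k, ?_⟩
    rw [← smul_smul] at *
    rw [← h5]
    abel
  -- surjectivity of D onto the mean-zero subspace
  have hDones : D *ᵥ ones = 0 := by
    have hmem : ones ∈ LinearMap.ker D.mulVecLin := by
      rw [hker]; exact Submodule.mem_span_singleton_self _
    simpa using hmem
  obtain ⟨v0, hv0⟩ : ∃ v0 : Fin N → ℂ, D *ᵥ v0 = u := by
    set f : (Fin N → ℂ) →ₗ[ℂ] ℂ :=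
      { toFun := fun x => ∑ k, x k
        map_add' := fun x y => by simp [Finset.sum_add_distrib]
        map_smul' := fun r x => by simp [Finset.mul_sum] } with hf
    have hones_ne : ones ≠ 0 := by
      intro h
      have := congrFun h ⟨0, hN0⟩
      simp [hones] at this
    have hf_ne : f ≠ 0 := by
      intro h
      have h7 : f ones = 0 := by rw [h]; rfl
      rw [hf] at h7
      simp only [LinearMap.coe_mk, AddHom.coe_mk] at h7
      rw [hsum_ones] at h7
      exact hNC h7
    have hcol : ∀ k, (∑ j, D j k) = 0 := by
      intro k
      have h5 : ∀ j, D j k = -star (D k j) := by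
        intro j
        have h6 := congrFun (congrFun hD j) k
        rw [conjTranspose_apply] at h6
        simp only [Matrix.neg_apply] at h6
        rw [h6, neg_neg]
      calc (∑ j, D j k) = ∑ j, -star (D k j) := Finset.sum_congr rfl fun j _ => h5 j
      _ = -star (∑ j, D k j) := by rw [star_sum, Finset.sum_neg_distrib]
      _ = 0 := by
            have h8 : (∑ j, D k j) = 0 := by
              have h9 := congrFun hDones k
              simpa [mulVec, dotProduct, hones] using h9
            rw [h8, star_zero, neg_zero]
    have hrange_le : LinearMap.range D.mulVecLin ≤ LinearMap.ker f := by
      rintro _ ⟨x, rfl⟩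
      show f (D *ᵥ x) = 0
      rw [hf]
      simp only [LinearMap.coe_mk, AddHom.coe_mk, mulVec, dotProduct]
      rw [Finset.sum_comm]
      calc (∑ k, ∑ j : Fin N, D j k * x k)
          = ∑ k, (∑ j, D j k) * x k :=
            Finset.sum_congr rfl fun k _ => (Finset.sum_mul _ _ _).symm
      _ = 0 := by simp [hcol]
    have hkerD : Module.finrank ℂ (LinearMap.ker D.mulVecLin) = 1 := by
      rw [hker]; exact finrank_span_singleton hones_ne
    have hrk1 := LinearMap.finrank_range_add_finrank_ker D.mulVecLin
    rw [hkerD, Module.finrank_pi, Fintype.card_fin] at hrk1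
    have hrk2 := Module.Dual.finrank_ker_add_one_of_ne_zero hf_ne
    rw [Module.finrank_pi, Fintype.card_fin] at hrk2
    have heq : LinearMap.range D.mulVecLin = LinearMap.ker f :=
      Submodule.eq_of_le_of_finrank_eq hrange_le (by omega)
    have humem : u ∈ LinearMap.ker f := by
      show f u = 0
      rw [hf]
      exact hSu
    rw [← heq] at humem
    obtain ⟨v0, hv0⟩ := humem
    exact ⟨v0, by simpa using hv0⟩
  -- the final vector
  set v : Fin N → ℂ := Pm *ᵥ v0 with hv
  have hDv : D *ᵥ v = u := by
    rw [hv, hPmul, mulVec_sub, hv0, mulVec_smul, mulVec_smul, hDones]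
    simp
  refine ⟨1 - σ⁻¹ * lam, v, ?_, hsumP v0, ?_, ?_⟩
  · intro h
    apply hu_ne
    rw [← hDv, h, mulVec_zero]
  · have hL : B *ᵥ v = ((lam - σ : ℝ) : ℂ) • (D *ᵥ u) := by
      rw [hB, ← mulVec_mulVec, ← mulVec_mulVec, hDv, sub_mulVec, smul_mulVec, one_mulVec,
        hc]
      have hrw : (lam : ℂ) • u + c • ones - (σ : ℂ) • u
          = ((lam - σ : ℝ) : ℂ) • u + c • ones := by
        push_cast
        module
      rw [hrw, mulVec_add, mulVec_smul, mulVec_smul, hDones, smul_zero, add_zero]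
    have hR : ((1 - σ⁻¹ * lam : ℝ) : ℂ) • ((-A) *ᵥ v) = ((lam - σ : ℝ) : ℂ) • (D *ᵥ u) := by
      rw [hA, neg_mulVec, smul_mulVec, ← mulVec_mulVec, hDv, ← neg_smul, smul_smul]
      congr 1
      push_cast
      field_simp
      ring
    rw [hL, ← hR]
  · have hσi : 0 < σ⁻¹ := inv_pos.mpr hσ
    nlinarith [mul_le_mul_of_nonneg_left hlam_ge (le_of_lt hσi)]
end

section
/- Let N ≥ 1, let c : Fin N → ℝ, and let μ ∈ ℝ be such that c_j ≠ μ for every j. Then the following are equivalent: (i) there exists a nonzero vector y ∈ ℂ^N with Σ_j y_j = 0 and a scalar α ∈ ℂ such that (c_j − μ)·y_j = α for every j; (ii) Σ_j (c_j − μ)⁻¹ = 0. (This is the secular-equation reduction used in the proof of Proposition 1: the constrained problem (S − μ·I)y = α·𝟙, 𝟙ᵀy = 0 with S = diag(c) has a nontrivial solution exactly when g(μ) = Σ_j (c_j − μ)⁻¹ vanishes.) -/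
/-- Secular-equation reduction from the proof of Proposition 1: the constrained
problem `(diag c − μ I) y = α 𝟙`, `𝟙ᵀ y = 0` has a nontrivial solution `y ≠ 0`
exactly when `g(μ) = Σ_j (c_j − μ)⁻¹ = 0` (assuming `μ` avoids all `c_j`). -/
theorem stmt4 (N : ℕ) (hN : 1 ≤ N) (c : Fin N → ℝ) (μ : ℝ)
    (hμ : ∀ j, c j ≠ μ) :
    (∃ y : Fin N → ℂ, y ≠ 0 ∧ (∑ j, y j) = 0 ∧
      ∃ α : ℂ, ∀ j, ((c j : ℂ) - (μ : ℂ)) * y j = α) ↔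
    (∑ j, (c j - μ)⁻¹) = 0 := by
  have hC : ∀ j, ((c j : ℂ) - (μ : ℂ)) ≠ 0 := by
    intro j h
    apply hμ j
    have : ((c j : ℂ)) = (μ : ℂ) := by linear_combination h
    exact_mod_cast this
  constructor
  · rintro ⟨y, hy0, hsum, α, hα⟩
    have hyj : ∀ j, y j = α * ((c j : ℂ) - (μ : ℂ))⁻¹ := by
      intro j
      rw [← div_eq_mul_inv, eq_div_iff (hC j)]
      linear_combination hα j
    have hαne : α ≠ 0 := by
      intro h
      apply hy0
      funext j
      simp [hyj j, h]
    have : α * ∑ j, ((c j : ℂ) - (μ : ℂ))⁻¹ = 0 := by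
      rw [Finset.mul_sum, ← hsum]
      exact Finset.sum_congr rfl fun j _ => (hyj j).symm
    have hz : (∑ j, ((c j : ℂ) - (μ : ℂ))⁻¹) = 0 := by
      rcases mul_eq_zero.mp this with h | h
      · exact absurd h hαne
      · exact h
    have : ((∑ j, (c j - μ)⁻¹ : ℝ) : ℂ) = 0 := by
      push_cast
      exact hz
    exact_mod_cast this
  · intro hg
    refine ⟨fun j => ((c j : ℂ) - (μ : ℂ))⁻¹, ?_, ?_, 1, ?_⟩
    · intro h
      have := congrFun h ⟨0, hN⟩
      simp at this
      exact hC _ this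
    · have : ((∑ j, (c j - μ)⁻¹ : ℝ) : ℂ) = 0 := by exact_mod_cast hg
      push_cast at this
      exact this
    · intro j
      exact mul_inv_cancel₀ (hC j)
end

section
/- Let N ≥ 1 and let c : Fin N → ℝ be non-constant. Let a = min_j c_j and let b be the minimum of the (nonempty) set { c_j : c_j > a }, i.e., the smallest value of c strictly greater than a. Then there exists a real number μ with a < μ < b such that Σ_j (c_j − μ)⁻¹ = 0. (This is the interlacing claim in the proof of Proposition 1: ordering the poles of g(μ) = Σ_j (c_j − μ)⁻¹ along the real axis, there is at least one root of g between the smallest two distinct pole locations.) -/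
/-- Interlacing claim from the proof of Proposition 1: if `c` is non-constant,
`a` is the smallest value of `c`, and `b` is the smallest value of `c` strictly
greater than `a`, then `g(μ) = Σ_j (c_j − μ)⁻¹` has a root `μ` with `a < μ < b`. -/
theorem stmt5 (N : ℕ) (hN : 1 ≤ N) (c : Fin N → ℝ)
    (hnc : ∃ i j : Fin N, c i ≠ c j)
    (a b : ℝ)
    (ha : IsLeast (Set.range c) a)
    (hb : IsLeast {x : ℝ | x ∈ Set.range c ∧ a < x} b) :
    ∃ μ : ℝ, a < μ ∧ μ < b ∧ (∀ j, c j ≠ μ) ∧ (∑ j, (c j - μ)⁻¹) = 0 := by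
  obtain ⟨ia, hia⟩ := ha.1
  obtain ⟨⟨ib, hib⟩, hab⟩ := hb.1
  -- every value is either a or ≥ b
  have hkey : ∀ j, c j = a ∨ b ≤ c j := by
    intro j
    rcases eq_or_lt_of_le (ha.2 ⟨j, rfl⟩) with h | h
    · exact Or.inl h.symm
    · exact Or.inr (hb.2 ⟨⟨j, rfl⟩, h⟩)
  set ε : ℝ := (b - a) / (2 * (N + 1)) with hε
  have hNpos : (0:ℝ) < N := by exact_mod_cast hN
  have hεpos : 0 < ε := by
    apply div_pos (by linarith) (by positivity)
  have hNε : ((N:ℝ) + 1) * ε = (b - a) / 2 := by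
    rw [hε]; field_simp
  set μ₁ : ℝ := a + ε with hμ₁
  set μ₂ : ℝ := b - ε with hμ₂
  have h12 : μ₁ ≤ μ₂ := by
    simp only [hμ₁, hμ₂]
    nlinarith
  have haμ₁ : a < μ₁ := by simp only [hμ₁]; linarith
  have hμ₂b : μ₂ < b := by simp only [hμ₂]; linarith
  have hba : 0 < b - a - ε := by nlinarith
  set g : ℝ → ℝ := fun μ => ∑ j, (c j - μ)⁻¹ with hg
  -- nonvanishing denominators on [μ₁, μ₂]
  have hne : ∀ j, ∀ μ ∈ Set.Icc μ₁ μ₂, c j - μ ≠ 0 := by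
    intro j μ hμ
    rcases hkey j with h | h
    · have : c j - μ ≤ -ε := by rw [h]; simp only [hμ₁] at hμ; linarith [hμ.1]
      linarith
    · have : ε ≤ c j - μ := by simp only [hμ₂] at hμ; linarith [hμ.2]
      linarith
  have hcont : ContinuousOn g (Set.Icc μ₁ μ₂) := by
    apply continuousOn_finset_sum
    intro j _
    exact ContinuousOn.inv₀ (by fun_prop) (hne j)
  have hlt : (N:ℝ) * (b - a - ε)⁻¹ < ε⁻¹ := by
    rw [← div_eq_mul_inv, ← one_div, div_lt_div_iff₀ hba hεpos]
    nlinarith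
  -- g μ₁ < 0
  have hg1 : g μ₁ < 0 := by
    have hsplit : g μ₁ = (c ia - μ₁)⁻¹ + ∑ j ∈ Finset.univ.erase ia, (c j - μ₁)⁻¹ :=
      (Finset.add_sum_erase _ (fun j => (c j - μ₁)⁻¹) (Finset.mem_univ ia)).symm
    have hb1 : b - μ₁ = b - a - ε := by simp only [hμ₁]; ring
    have hbpos : (0:ℝ) < (b - μ₁)⁻¹ := by rw [hb1]; positivity
    have hbound : ∀ j ∈ Finset.univ.erase ia, (c j - μ₁)⁻¹ ≤ (b - μ₁)⁻¹ := by
      intro j _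
      rcases hkey j with h | h
      · have h1 : c j - μ₁ = -ε := by rw [h]; simp only [hμ₁]; ring
        rw [h1, inv_neg]
        have : (0:ℝ) < ε⁻¹ := by positivity
        linarith
      · apply inv_anti₀
        · rw [hb1]; linarith
        · linarith
    have hsum : ∑ j ∈ Finset.univ.erase ia, (c j - μ₁)⁻¹
        ≤ ((Finset.univ.erase ia).card : ℝ) * (b - μ₁)⁻¹ := by
      have := Finset.sum_le_card_nsmul (Finset.univ.erase ia) (fun j => (c j - μ₁)⁻¹)
        ((b - μ₁)⁻¹) hbound
      simpa [nsmul_eq_mul] using this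
    have hcard : ((Finset.univ.erase ia).card : ℝ) ≤ N := by
      have := Finset.card_erase_le (a := ia) (s := (Finset.univ : Finset (Fin N)))
      have h2 : (Finset.univ : Finset (Fin N)).card = N := by simp
      exact_mod_cast le_trans this (le_of_eq h2)
    have hfin : (c ia - μ₁)⁻¹ + (N:ℝ) * (b - μ₁)⁻¹ < 0 := by
      have h1 : c ia - μ₁ = -ε := by rw [hia]; simp only [hμ₁]; ring
      rw [h1, hb1, inv_neg]
      linarith
    calc g μ₁ ≤ (c ia - μ₁)⁻¹ + ((Finset.univ.erase ia).card : ℝ) * (b - μ₁)⁻¹ := by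
            rw [hsplit]; linarith
      _ ≤ (c ia - μ₁)⁻¹ + (N:ℝ) * (b - μ₁)⁻¹ := by nlinarith
      _ < 0 := hfin
  -- g μ₂ > 0
  have hg2 : 0 < g μ₂ := by
    have hsplit : g μ₂ = (c ib - μ₂)⁻¹ + ∑ j ∈ Finset.univ.erase ib, (c j - μ₂)⁻¹ :=
      (Finset.add_sum_erase _ (fun j => (c j - μ₂)⁻¹) (Finset.mem_univ ib)).symm
    have ha2 : a - μ₂ = -(b - a - ε) := by simp only [hμ₂]; ring
    have haneg : (a - μ₂)⁻¹ < 0 := by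
      rw [ha2, inv_neg]
      have : (0:ℝ) < (b - a - ε)⁻¹ := by positivity
      linarith
    have hbound : ∀ j ∈ Finset.univ.erase ib, (a - μ₂)⁻¹ ≤ (c j - μ₂)⁻¹ := by
      intro j _
      rcases hkey j with h | h
      · rw [h]
      · have h2 : (0:ℝ) ≤ (c j - μ₂)⁻¹ := by
          apply inv_nonneg.2; simp only [hμ₂]; linarith
        linarith
    have hsum : ((Finset.univ.erase ib).card : ℝ) * (a - μ₂)⁻¹
        ≤ ∑ j ∈ Finset.univ.erase ib, (c j - μ₂)⁻¹ := by
      have := Finset.card_nsmul_le_sum (Finset.univ.erase ib) (fun j => (c j - μ₂)⁻¹)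
        ((a - μ₂)⁻¹) hbound
      simpa [nsmul_eq_mul] using this
    have hcard : ((Finset.univ.erase ib).card : ℝ) ≤ N := by
      have := Finset.card_erase_le (a := ib) (s := (Finset.univ : Finset (Fin N)))
      have h2 : (Finset.univ : Finset (Fin N)).card = N := by simp
      exact_mod_cast le_trans this (le_of_eq h2)
    have hfin : 0 < (c ib - μ₂)⁻¹ + (N:ℝ) * (a - μ₂)⁻¹ := by
      have h1 : c ib - μ₂ = ε := by rw [hib]; simp only [hμ₂]; ring
      rw [h1, ha2, inv_neg, mul_neg]
      linarith
    calc (0:ℝ) < (c ib - μ₂)⁻¹ + (N:ℝ) * (a - μ₂)⁻¹ := hfin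
      _ ≤ (c ib - μ₂)⁻¹ + ((Finset.univ.erase ib).card : ℝ) * (a - μ₂)⁻¹ := by nlinarith
      _ ≤ g μ₂ := by rw [hsplit]; linarith
  -- IVT
  have hIVT := intermediate_value_Icc h12 hcont
  have h0 : (0:ℝ) ∈ Set.Icc (g μ₁) (g μ₂) := ⟨le_of_lt hg1, le_of_lt hg2⟩
  obtain ⟨μ, hμmem, hμ0⟩ := hIVT h0
  refine ⟨μ, lt_of_lt_of_le haμ₁ hμmem.1, lt_of_le_of_lt hμmem.2 hμ₂b, ?_, hμ0⟩
  intro j hj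
  exact hne j μ hμmem (by rw [hj]; ring)
end

section
/- Let r ≥ 3 be an integer, let η ∈ (0,1), and let d_min, d_max be real numbers with 0 < d_min ≤ d_max. Set C = cos(π/r)^{−r}, κ = (d_min/d_max)·(1 − η), δ* = 2 − 2·((1 − κ)/(1 + κ·C))^{1/r}, and σ* = d_min·(1 − η/2)·(1 + C)/(1 + κ·C). Then the pair (δ*, σ*) satisfies the strict unconditional stability constraints: (1 − (1 − δ*/2)^r)·d_max < σ* and σ* < (1 + (1 − δ*/2)^r·C)·d_min. (This verifies that the closed-form parameters (δ*, σ*) of equation (5.13) satisfy the feasibility inequalities (5.11) for the variable-coefficient diffusion splitting.) -/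
/-- The closed-form parameters `(δ*, σ*)` of equation (5.13) satisfy the strict
feasibility inequalities (5.11) for the variable-coefficient diffusion
splitting: `(1 − (1 − δ*/2)^r) d_max < σ* < (1 + (1 − δ*/2)^r C) d_min`,
where `C = cos(π/r)^{−r}`, `κ = (d_min/d_max)(1 − η)`,
`δ* = 2 − 2((1 − κ)/(1 + κ C))^{1/r}`, and
`σ* = d_min (1 − η/2)(1 + C)/(1 + κ C)`. -/
theorem stmt11 (r : ℕ) (hr : 3 ≤ r) (η : ℝ) (hη0 : 0 < η) (hη1 : η < 1)
    (dmin dmax : ℝ) (h1 : 0 < dmin) (h2 : dmin ≤ dmax)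
    (C κ δstar σstar : ℝ)
    (hC : C = (Real.cos (Real.pi / r))⁻¹ ^ r)
    (hκ : κ = (dmin / dmax) * (1 - η))
    (hδ : δstar = 2 - 2 * ((1 - κ) / (1 + κ * C)) ^ ((r : ℝ)⁻¹))
    (hσ : σstar = dmin * (1 - η/2) * (1 + C) / (1 + κ * C)) :
    (1 - (1 - δstar/2)^r) * dmax < σstar ∧
      σstar < (1 + (1 - δstar/2)^r * C) * dmin := by
  have hr' : (3:ℝ) ≤ (r:ℝ) := by exact_mod_cast hr
  have hrpos : (0:ℝ) < r := by linarith
  have hmax : 0 < dmax := lt_of_lt_of_le h1 h2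
  have hcos : 0 < Real.cos (Real.pi / r) := by
    apply Real.cos_pos_of_mem_Ioo
    constructor
    · have : 0 < Real.pi / r := div_pos Real.pi_pos hrpos
      linarith [Real.pi_pos]
    · have h3 : Real.pi / r ≤ Real.pi / 3 :=
        div_le_div_of_nonneg_left Real.pi_pos.le (by norm_num) hr'
      have : Real.pi / 3 < Real.pi / 2 := by
        apply div_lt_div_of_pos_left Real.pi_pos <;> norm_num
      linarith
  have hCpos : 0 < C := by rw [hC]; positivity
  have hκpos : 0 < κ := by
    rw [hκ]; exact mul_pos (div_pos h1 hmax) (by linarith)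
  have hκ1 : κ < 1 := by
    have hd : dmin / dmax ≤ 1 := (div_le_one hmax).2 h2
    have : κ ≤ 1 * (1 - η) := by
      rw [hκ]; exact mul_le_mul_of_nonneg_right hd (by linarith)
    linarith
  have hden : 0 < 1 + κ * C := by positivity
  have hA : 0 < (1 - κ) / (1 + κ * C) := div_pos (by linarith) hden
  have hkey : (1 - δstar/2)^r = (1 - κ) / (1 + κ * C) := by
    have : 1 - δstar/2 = ((1 - κ) / (1 + κ * C)) ^ ((r : ℝ)⁻¹) := by
      rw [hδ]; ring
    rw [this, ← Real.rpow_natCast (_ ^ ((r:ℝ)⁻¹)) r, ← Real.rpow_mul hA.le,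
      inv_mul_cancel₀ (ne_of_gt hrpos), Real.rpow_one]
  have hκd : κ * dmax = dmin * (1 - η) := by
    rw [hκ]; field_simp
  constructor
  · rw [hkey, hσ]
    rw [lt_div_iff₀ hden]
    have : (1 - (1 - κ) / (1 + κ * C)) * dmax * (1 + κ * C)
        = κ * (1 + C) * dmax := by field_simp; ring_nf
    rw [this]
    nlinarith [mul_pos h1 hCpos, mul_pos (mul_pos h1 hCpos) hη0]
  · rw [hkey, hσ]
    rw [div_lt_iff₀ hden]
    have : (1 + (1 - κ) / (1 + κ * C) * C) * dmin * (1 + κ * C)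
        = (1 + C) * dmin := by field_simp; ring_nf
    rw [this]
    nlinarith [mul_pos h1 hCpos, mul_pos (mul_pos h1 hCpos) hη0]
end

section
/- Let r ≥ 1 be an integer and δ ∈ (0,1]. Define f : ℝ → ℝ by f(x) = log(x)·(x − 1 + δ)^r (natural logarithm), let a : ℝ → ℝ be its degree-r Taylor polynomial at x = 1, a(x) = Σ_{j=1}^r (f^{(j)}(1)/j!)·(x − 1)^j, and let c(x) = (x − 1 + δ)^r. Then as h → 0 one has a(e^h) − h·c(e^h) = O(h^{r+1}); that is, the function h ↦ a(e^h) − h·c(e^h) is big-O of h^{r+1} in a neighborhood of 0. (This is the implicit-part order condition of Remark 2.1: the polynomials a and c of the new ImEx coefficients define an r-th order approximation.) -/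
open Topology Asymptotics


/-- Implicit-part order condition of Remark 2.1: with
`f(x) = log x · (x − 1 + δ)^r`, `a` its degree-`r` Taylor polynomial at `x = 1`,
and `c(x) = (x − 1 + δ)^r`, one has `a(e^h) − h·c(e^h) = O(h^{r+1})` as `h → 0`. -/
theorem stmt12 (r : ℕ) (hr : 1 ≤ r) (δ : ℝ) (hδ0 : 0 < δ) (hδ1 : δ ≤ 1)
    (f a c : ℝ → ℝ)
    (hf : ∀ x, f x = Real.log x * (x - 1 + δ) ^ r)
    (ha : ∀ x, a x = ∑ j ∈ Finset.Icc 1 r,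
      (iteratedDeriv j f 1 / (Nat.factorial j : ℝ)) * (x - 1) ^ j)
    (hc : ∀ x, c x = (x - 1 + δ) ^ r) :
    Asymptotics.IsBigO (nhds (0 : ℝ))
      (fun h : ℝ => a (Real.exp h) - h * c (Real.exp h))
      (fun h : ℝ => h ^ (r + 1)) := by
  -- log is real-analytic at 1
  have hlog : AnalyticAt ℝ Real.log 1 := by
    have h1 : AnalyticAt ℂ Complex.log 1 := analyticAt_clog (by simp [Complex.slitPlane])
    have h2 : AnalyticAt ℝ (fun x : ℝ => (Complex.log x).re) 1 := by
      have h1' : AnalyticAt ℝ Complex.log (Complex.ofRealCLM (1:ℝ)) := by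
        simpa using h1.restrictScalars (𝕜 := ℝ)
      have h3 := h1'.comp (Complex.ofRealCLM.analyticAt (1:ℝ))
      have h4 := (Complex.reCLM.analyticAt ((Complex.log ∘ Complex.ofRealCLM) (1:ℝ))).comp h3
      simpa [Function.comp_def] using h4
    apply h2.congr
    filter_upwards [eventually_gt_nhds (zero_lt_one (α := ℝ))] with x hx
    rw [← Complex.ofReal_log hx.le, Complex.ofReal_re]
  have hfa : AnalyticAt ℝ f 1 := by
    have : AnalyticAt ℝ (fun x : ℝ => Real.log x * (x - 1 + δ) ^ r) 1 :=
      hlog.mul ((((analyticAt_id).sub analyticAt_const).add analyticAt_const).pow r)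
    exact this.congr (Filter.Eventually.of_forall fun x => (hf x).symm)
  obtain ⟨p, hp⟩ := hfa
  -- coefficients of the power series are the Taylor coefficients
  have hcoeff : ∀ n, p.coeff n = iteratedDeriv n f 1 / (Nat.factorial n : ℝ) := by
    intro n
    obtain ⟨R, hR⟩ := hp
    have h1 := hR.factorial_smul (y := (1:ℝ)) n
    rw [FormalMultilinearSeries.apply_eq_pow_smul_coeff, one_pow, one_smul,
      ← iteratedDeriv_eq_iteratedFDeriv, nsmul_eq_mul] at h1
    field_simp [← h1, mul_comm]
    rw [← h1]; ring
  -- partial sum equals `a`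
  have hsum : ∀ y : ℝ, p.partialSum (r + 1) y = a (1 + y) := by
    intro y
    rw [ha]
    simp only [FormalMultilinearSeries.partialSum,
      FormalMultilinearSeries.apply_eq_pow_smul_coeff, smul_eq_mul, hcoeff]
    rw [Finset.sum_range_succ', ← Finset.Ico_add_one_right_eq_Icc, Finset.sum_Ico_eq_sum_range]
    have hf1 : f 1 = 0 := by rw [hf]; simp
    simp only [Nat.add_sub_cancel, pow_zero, one_mul, iteratedDeriv_zero, Nat.factorial_zero,
      Nat.cast_one, hf1, zero_div, add_zero, add_sub_cancel_left]
    exact Finset.sum_congr rfl fun i _ => by rw [Nat.add_comm 1 i]; ring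
  have hO := hp.isBigO_sub_partialSum_pow (r + 1)
  simp only [hsum] at hO
  have htend : Filter.Tendsto (fun h : ℝ => Real.exp h - 1) (𝓝 0) (𝓝 0) := by
    have := (Real.continuous_exp.tendsto 0).sub (tendsto_const_nhds (x := (1:ℝ)))
    simpa using this
  have hO2 := hO.comp_tendsto htend
  have e : ∀ h : ℝ, 1 + (Real.exp h - 1) = Real.exp h := fun h => by ring
  simp only [Function.comp_def, e] at hO2
  have hexp : (fun h : ℝ => Real.exp h - 1) =O[𝓝 0] fun h : ℝ => h := by
    have := (Real.hasDerivAt_exp 0).hasFDerivAt.isBigO_sub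
    simpa using this
  have hnorm : (fun h : ℝ => ‖Real.exp h - 1‖ ^ (r + 1)) =O[𝓝 0] fun h : ℝ => h ^ (r + 1) := by
    have := (hexp.pow (r + 1)).norm_left
    simpa [norm_pow] using this
  have hfinal := (hO2.trans hnorm).neg_left
  refine hfinal.congr_left fun h => ?_
  rw [hf, hc, Real.log_exp]; ring
end

section
/- Let r ≥ 1 be an integer and δ ∈ (0,1]. Define f : ℝ → ℝ by f(x) = log(x)·(x − 1 + δ)^r (natural logarithm), let a : ℝ → ℝ be its degree-r Taylor polynomial at x = 1, a(x) = Σ_{j=1}^r (f^{(j)}(1)/j!)·(x − 1)^j, and let b(x) = (x − 1 + δ)^r − (x − 1)^r. Then as h → 0 one has a(e^h) − h·b(e^h) = O(h^{r+1}); that is, the function h ↦ a(e^h) − h·b(e^h) is big-O of h^{r+1} in a neighborhood of 0. (This is the explicit-part order condition of Remark 2.1: the relation b(z) = c(z) − (z−1)^r ensures the ImEx coefficients satisfy the order conditions for an r-th order scheme.) -/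
open Asymptotics Filter Real Topology

lemma analyticAt_real_log_one : AnalyticAt ℝ Real.log 1 := by
  have h1 : AnalyticAt ℝ (fun x : ℝ => (Complex.log x).re) 1 := by
    have hc : AnalyticAt ℂ Complex.log ((1:ℝ):ℂ) := by
      apply analyticAt_clog
      simp [Complex.slitPlane]
    have := (hc.restrictScalars (𝕜 := ℝ)).comp (Complex.ofRealCLM.analyticAt 1)
    exact (Complex.reCLM.analyticAt _).comp this
  apply h1.congr
  filter_upwards [eventually_gt_nhds (show (0:ℝ) < 1 by norm_num)] with x hx
  rw [Complex.log_re, Complex.norm_real, Real.norm_eq_abs, abs_of_pos hx]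

/-- Explicit-part order condition of Remark 2.1: with
`f(x) = log x · (x − 1 + δ)^r`, `a` its degree-`r` Taylor polynomial at `x = 1`,
and `b(x) = (x − 1 + δ)^r − (x − 1)^r`, one has
`a(e^h) − h·b(e^h) = O(h^{r+1})` as `h → 0`. -/
theorem stmt13 (r : ℕ) (hr : 1 ≤ r) (δ : ℝ) (hδ0 : 0 < δ) (hδ1 : δ ≤ 1)
    (f a b : ℝ → ℝ)
    (hf : ∀ x, f x = Real.log x * (x - 1 + δ) ^ r)
    (ha : ∀ x, a x = ∑ j ∈ Finset.Icc 1 r,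
      (iteratedDeriv j f 1 / (Nat.factorial j : ℝ)) * (x - 1) ^ j)
    (hb : ∀ x, b x = (x - 1 + δ) ^ r - (x - 1) ^ r) :
    Asymptotics.IsBigO (nhds (0 : ℝ))
      (fun h : ℝ => a (Real.exp h) - h * b (Real.exp h))
      (fun h : ℝ => h ^ (r + 1)) := by
  -- f is analytic at 1
  have hfe : f = fun x => Real.log x * (x - 1 + δ) ^ r := funext hf
  have hA : AnalyticAt ℝ f 1 := by
    rw [hfe]
    exact analyticAt_real_log_one.mul
      ((((analyticAt_id).sub analyticAt_const).add analyticAt_const).pow r)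
  obtain ⟨p, R, hR⟩ : ∃ p R, HasFPowerSeriesOnBall f p 1 R := by
    obtain ⟨p, hp⟩ := hA
    obtain ⟨R, hR⟩ := hp
    exact ⟨p, R, hR⟩
  have hf1 : f 1 = 0 := by rw [hf]; simp
  -- coefficients of p
  have hcoeff : ∀ (j : ℕ) (y : ℝ), p j (fun _ => y) = iteratedDeriv j f 1 / j.factorial * y ^ j := by
    intro j y
    have h1 := hR.factorial_smul (y := y) j
    have h2 : iteratedFDeriv ℝ j f 1 (fun _ => y) = y ^ j • iteratedDeriv j f 1 := by
      rw [iteratedFDeriv_apply_eq_iteratedDeriv_mul_prod]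
      simp
    rw [h2] at h1
    have hj : (j.factorial : ℝ) ≠ 0 := Nat.cast_ne_zero.mpr j.factorial_ne_zero
    have h1' : (j.factorial : ℝ) * (y ^ j * p.coeff j) = y ^ j * iteratedDeriv j f 1 := by
      simpa [nsmul_eq_mul, smul_eq_mul] using h1
    rw [FormalMultilinearSeries.apply_eq_pow_smul_coeff, smul_eq_mul]
    field_simp
    linear_combination h1'
  -- partial sum equals a (1 + y)
  have key : ∀ y : ℝ, p.partialSum (r + 1) y = a (1 + y) := by
    intro y
    rw [ha, FormalMultilinearSeries.partialSum]
    have hset : Finset.range (r + 1) = insert 0 (Finset.Icc 1 r) := by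
      ext j; simp [Nat.lt_succ_iff]; omega
    rw [hset, Finset.sum_insert (by simp)]
    simp only [hcoeff]
    have h0 : iteratedDeriv 0 f 1 = 0 := by simpa using hf1
    rw [h0]
    simp only [add_sub_cancel_left]
    ring_nf
  -- Taylor remainder big-O
  have H1 : (fun y : ℝ => f (1 + y) - a (1 + y)) =O[𝓝 0] fun y => y ^ (r + 1) := by
    have := hR.hasFPowerSeriesAt.isBigO_sub_partialSum_pow (r + 1)
    simp only [key] at this
    have h2 : (fun y : ℝ => ‖y‖ ^ (r + 1)) =O[𝓝 (0:ℝ)] fun y => y ^ (r + 1) := by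
      apply IsBigO.of_bound 1
      filter_upwards with y
      simp [abs_pow]
    exact this.trans h2
  -- exp h - 1 tends to 0 and is O(h)
  have hexp : Tendsto (fun h : ℝ => Real.exp h - 1) (𝓝 0) (𝓝 0) := by
    have := (Real.continuous_exp.tendsto 0).sub (tendsto_const_nhds (x := (1:ℝ)))
    simpa using this
  have hE : (fun h : ℝ => Real.exp h - 1) =O[𝓝 0] fun h => h := by
    have h1 := (Real.hasDerivAt_exp 0).isBigO_sub
    simpa using h1
  -- compose
  have H2 := H1.comp_tendsto hexp
  have H3 : (fun h : ℝ => f (Real.exp h) - a (Real.exp h)) =O[𝓝 0] fun h => h ^ (r + 1) := by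
    have hEp : (fun h : ℝ => (Real.exp h - 1) ^ (r + 1)) =O[𝓝 0] fun h => h ^ (r + 1) :=
      hE.pow (r + 1)
    have := H2.trans hEp
    simpa [Function.comp_def] using this
  have H4 : (fun h : ℝ => h * (Real.exp h - 1) ^ r) =O[𝓝 0] fun h => h ^ (r + 1) := by
    have := (isBigO_refl (fun h : ℝ => h) (𝓝 0)).mul (hE.pow r)
    apply this.trans
    apply IsBigO.of_bound 1
    filter_upwards with y
    simp [pow_succ, mul_comm, abs_mul, abs_pow]
  have Hsum := (H3.neg_left).add H4
  apply Hsum.congr_left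
  intro h
  rw [hf, hb, Real.log_exp]
  ring
end
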